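/- arXiv:1804.08160 — 2 statements merged into one kernel-verified Lean document; each statement's English description precedes it below -/
import Mathlib

section
/- Necessary coefficient growth in any presentation of e: if a, b, c ∈ ℂ[[x,y,z]] with a and b depending only on x,y satisfy e = a·1 + b·G + c·H, then for every k ≥ 2 the coefficient of a at the monomial x²y^{k−2} (z-exponent 0) has absolute value equal to 1/q_{k,k}. -/
open Polynomial Finset

/-- `Ap Y k = ∑_{j<k} C(k-1+j, j) Y^j`. -/
noncomputable def Ap (Y : ℚ[X]) (k : ℕ) : ℚ[X] :=
  ∑ j ∈ Finset.range k, ((k - 1 + j).choose j : ℚ) • Y ^ j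

lemma Ap_one (Y : ℚ[X]) : Ap Y 1 = 1 := by
  simp [Ap]

lemma Ap_rec (Y : ℚ[X]) (m : ℕ) :
    (1 - Y) * Ap Y (m + 2) + (((2*m+2).choose (m+1) : ℚ)) • Y ^ (m+2)
      = Ap Y (m+1) + (((2*m+1).choose (m+1) : ℚ)) • Y ^ (m+1) := by
  set S1 : ℚ[X] := ∑ j ∈ range (m+2), ((m + j).choose j : ℚ) • Y ^ j with hS1
  set T : ℚ[X] := ∑ i ∈ range (m+1), ((m + 1 + i).choose i : ℚ) • Y ^ (i+1) with hT
  have hR : Ap Y (m+1) + (((2*m+1).choose (m+1) : ℚ)) • Y ^ (m+1) = S1 := by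
    rw [hS1, Finset.sum_range_succ, show (m+(m+1)).choose (m+1) = (2*m+1).choose (m+1) from by congr 1; omega]
    congr 1
  have hA : Ap Y (m+2) = ∑ j ∈ range (m+2), ((m + 1 + j).choose j : ℚ) • Y ^ j := by
    unfold Ap
    apply Finset.sum_congr rfl; intro j hj
    have e1 : m + 2 - 1 + j = m + 1 + j := by omega
    rw [e1]
  have hsplit : ∀ j : ℕ, ((m + 1 + j).choose j : ℚ) • Y ^ j
      = ((m + j).choose j : ℚ) • Y ^ j + (if j = 0 then 0 else ((m + j).choose (j-1) : ℚ) • Y ^ j) := by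
    intro j
    cases j with
    | zero => simp
    | succ i =>
      have h : (m + 1 + (i+1)).choose (i+1) = (m + (i+1)).choose i + (m + (i+1)).choose (i+1) := by
        rw [show m + 1 + (i+1) = (m + (i+1)) + 1 by omega]
        exact Nat.choose_succ_succ (m + (i+1)) i
      rw [if_neg (Nat.succ_ne_zero i), h]
      push_cast
      rw [add_smul]
      simp [add_comm]
  have hAT : Ap Y (m+2) = S1 + T := by
    rw [hA, Finset.sum_congr rfl (fun j _ => hsplit j), Finset.sum_add_distrib, hS1, hT]
    congr 1
    rw [Finset.sum_range_succ']
    simp only [if_neg (Nat.succ_ne_zero _), reduceIte, add_zero]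
    apply Finset.sum_congr rfl; intro i hi
    have e1 : m + (i+1) = m + 1 + i := by omega
    simp [e1]
  have hYA : Y * Ap Y (m+2) = T + ((2*m+2).choose (m+1) : ℚ) • Y ^ (m+2) := by
    rw [hA, Finset.mul_sum, hT, Finset.sum_range_succ]
    congr 1
    · apply Finset.sum_congr rfl; intro i hi
      rw [mul_smul_comm, ← pow_succ']
    · rw [mul_smul_comm, ← pow_succ']
      rw [show m+1+(m+1) = 2*m+2 from by omega]
  linear_combination hAT - hYA - hR

/-- Bézout identity: `X^k·Ap(1-X,k) + (1-X)^k·Ap(X,k) = 1` for `k ≥ 1`. -/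
lemma bez (m : ℕ) :
    X ^ (m+1) * Ap (1 - X) (m+1) + (1 - X) ^ (m+1) * Ap X (m+1) = (1 : ℚ[X]) := by
  induction m with
  | zero => simp [Ap_one]
  | succ n ih =>
    have h1 := Ap_rec (X : ℚ[X]) n
    have h2 := Ap_rec ((1 : ℚ[X]) - X) n
    have h2' : X * Ap (1 - X) (n + 2) + ((2*n+2).choose (n+1) : ℚ) • (1 - X) ^ (n+2)
        = Ap (1-X) (n+1) + ((2*n+1).choose (n+1) : ℚ) • (1 - X) ^ (n+1) := by
      rw [show (1 : ℚ[X]) - (1 - X) = X by ring] at h2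
      exact h2
    have hch : ((2*n+2).choose (n+1) : ℚ) = 2 * ((2*n+1).choose (n+1) : ℚ) := by
      have e : (2*n+2).choose (n+1) = (2*n+1).choose n + (2*n+1).choose (n+1) := by
        rw [show 2*n+2 = (2*n+1)+1 by omega]
        exact Nat.choose_succ_succ (2*n+1) n
      have e2 : (2*n+1).choose n = (2*n+1).choose (n+1) := by
        rw [← Nat.choose_symm (by omega : n ≤ 2*n+1)]
        congr 1; omega
      rw [e, e2]; push_cast; ring
    simp only [smul_eq_C_mul] at h1 h2'
    have hchC : (C (((2*n+2).choose (n+1) : ℚ)) : ℚ[X]) = 2 * C (((2*n+1).choose (n+1) : ℚ)) := by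
      rw [hch, map_mul]; norm_num; left; exact map_ofNat C 2
    have key : X ^ (n+1+1) * Ap (1-X) (n+1+1) + (1-X)^(n+1+1) * Ap X (n+1+1)
        = X^(n+1) * (X * Ap (1-X) (n+2)) + (1-X)^(n+1) * ((1-X) * Ap X (n+2)) := by ring_nf
    rw [key]
    linear_combination X^(n+1) * h2' + (1-X)^(n+1) * h1 + ih +
      (- X^(n+1) * (1-X)^(n+1)) * hchC

/-- The solving polynomial `F = 1 - (1-X)^k·Ap X k = X^k·Ap (1-X) k`. -/
noncomputable def Fp (k : ℕ) : ℚ[X] := 1 - (1 - X)^k * Ap X k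

lemma Fp_eq (m : ℕ) : Fp (m+1) = X^(m+1) * Ap (1-X) (m+1) := by
  have h := bez m
  unfold Fp
  linear_combination -h

lemma natDegree_Ap (Y : ℚ[X]) (hY : Y.natDegree ≤ 1) (k : ℕ) (hk : 1 ≤ k) :
    (Ap Y k).natDegree ≤ k - 1 := by
  unfold Ap
  apply Polynomial.natDegree_sum_le_of_forall_le
  intro j hj
  refine le_trans (Polynomial.natDegree_smul_le _ _) ?_
  refine le_trans (Polynomial.natDegree_pow_le) ?_
  have := Finset.mem_range.mp hj
  calc j * Y.natDegree ≤ j * 1 := Nat.mul_le_mul_left j hY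
    _ ≤ k - 1 := by omega

lemma natDegree_one_sub : ((1 : ℚ[X]) - X).natDegree ≤ 1 := by
  refine le_trans (Polynomial.natDegree_sub_le _ _) ?_
  simp

lemma natDegree_Fp (m : ℕ) : (Fp (m+1)).natDegree ≤ 2*m+1 := by
  rw [Fp_eq]
  refine le_trans (Polynomial.natDegree_mul_le) ?_
  have h1 : ((X : ℚ[X])^(m+1)).natDegree ≤ m+1 := by
    refine le_trans (Polynomial.natDegree_pow_le) ?_
    simp
  have h2 := natDegree_Ap (1-X) natDegree_one_sub (m+1) (by omega)
  omega

lemma Fp_coeff_low (m s : ℕ) (hs : s < m+1) : (Fp (m+1)).coeff s = 0 := by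
  rw [Fp_eq, mul_comm, Polynomial.coeff_mul_X_pow']
  rw [if_neg (by omega)]

lemma coeff_one_sub_pow (n : ℕ) : ((1 - X : ℚ[X])^n).coeff n = (-1)^n := by
  rw [show (1 - X : ℚ[X]) = -(X - C 1) by simp, neg_pow]
  rw [show ((-1 : ℚ[X]))^n = C ((-1)^n) by rw [map_pow, map_neg, map_one], Polynomial.coeff_C_mul]
  have hm : ((X - C 1 : ℚ[X])^n).Monic := (Polynomial.monic_X_sub_C (1:ℚ)).pow n
  have hd : ((X - C 1 : ℚ[X])^n).natDegree = n := by
    rw [Polynomial.natDegree_pow, Polynomial.natDegree_X_sub_C, mul_one]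
  have := hm.coeff_natDegree
  rw [hd] at this
  rw [this, mul_one]

lemma Fp_coeff_top (m : ℕ) : (Fp (m+1)).coeff (2*m+1) = (-1)^m * ((2*m).choose m : ℚ) := by
  rw [Fp_eq, mul_comm, show 2*m+1 = m + (m+1) by omega, Polynomial.coeff_mul_X_pow]
  unfold Ap
  rw [Polynomial.finset_sum_coeff]
  rw [Finset.sum_eq_single m]
  · rw [Polynomial.coeff_smul, coeff_one_sub_pow]
    rw [show m+1-1+m = 2*m by omega]
    simp [mul_comm]
  · intro j hj hne
    rw [Polynomial.coeff_smul]
    have hdeg : ((1 - X : ℚ[X])^j).natDegree < m := by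
      have h1 : ((1 - X : ℚ[X])^j).natDegree ≤ j * 1 :=
        le_trans Polynomial.natDegree_pow_le (Nat.mul_le_mul_left j natDegree_one_sub)
      have := Finset.mem_range.mp hj; omega
    rw [Polynomial.coeff_eq_zero_of_natDegree_lt hdeg]
    simp
  · intro hm
    exact absurd (Finset.self_mem_range_succ m) hm

lemma taylor_one_sub : Polynomial.taylor (1:ℚ) (1 - X) = -X := by
  rw [map_sub, Polynomial.taylor_one, Polynomial.taylor_X, Polynomial.C_1]
  ring

lemma Fp_taylor (m : ℕ) :
    Polynomial.taylor (1:ℚ) (Fp (m+1))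
      = 1 - (-X)^(m+1) * Polynomial.taylor (1:ℚ) (Ap X (m+1)) := by
  unfold Fp
  rw [map_sub]
  have h1 : Polynomial.taylor (1:ℚ) (1:ℚ[X]) = 1 := by
    rw [Polynomial.taylor_one, Polynomial.C_1]
  rw [h1]
  congr 1
  rw [Polynomial.taylor_mul]
  congr 1
  rw [show Polynomial.taylor (1:ℚ) (((1:ℚ[X]) - X)^(m+1))
      = ((taylorAlgHom (1:ℚ)) ((1:ℚ[X]) - X))^(m+1) from map_pow (taylorAlgHom (1:ℚ)) _ _]
  rw [show (taylorAlgHom (1:ℚ)) ((1:ℚ[X]) - X) = Polynomial.taylor (1:ℚ) ((1:ℚ[X]) - X) from rfl]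
  rw [taylor_one_sub]

lemma Fp_taylor_coeff (m p : ℕ) (hp : p < m+1) :
    (Polynomial.taylor (1:ℚ) (Fp (m+1))).coeff p = if p = 0 then 1 else 0 := by
  rw [Fp_taylor, Polynomial.coeff_sub]
  have h0 : ((-X : ℚ[X])^(m+1) * Polynomial.taylor (1:ℚ) (Ap X (m+1))).coeff p = 0 := by
    rw [neg_pow, show ((-1 : ℚ[X]))^(m+1) = C ((-1)^(m+1)) by rw [map_pow, map_neg, map_one]]
    rw [mul_assoc, Polynomial.coeff_C_mul,
      mul_comm ((X:ℚ[X])^(m+1)) (Polynomial.taylor (1:ℚ) (Ap X (m+1))), Polynomial.coeff_mul_X_pow']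
    rw [if_neg (by omega), mul_zero]
  rw [h0, sub_zero, Polynomial.coeff_one]

lemma key_choose (m p : ℕ) (hp : p < m+1) :
    ∑ t ∈ Finset.range (m+1), (Fp (m+1)).coeff (m+1+t) * ((m+1+t).choose p : ℚ)
      = if p = 0 then 1 else 0 := by
  rw [← Fp_taylor_coeff m p hp, Polynomial.taylor_coeff]
  have hdeg : ((Polynomial.hasseDeriv p) (Fp (m+1))).natDegree < 2*m+2 := by
    rw [Polynomial.natDegree_hasseDeriv]
    have := natDegree_Fp m
    omega
  rw [Polynomial.eval_eq_sum_range' hdeg 1]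
  simp only [one_pow, mul_one, Polynomial.hasseDeriv_coeff]
  set g : ℕ → ℚ := fun s => ((s.choose p : ℚ)) * (Fp (m+1)).coeff s with hg
  have e1 : ∀ i : ℕ, ((i + p).choose p : ℚ) * (Fp (m+1)).coeff (i+p) = g (i+p) := fun i => rfl
  have estep1 : ∑ i ∈ Finset.range (2*m+2), g (i + p) = ∑ s ∈ Finset.range (p + (2*m+2)), g s := by
    rw [Finset.sum_range_add g p (2*m+2)]
    have : ∑ s ∈ Finset.range p, g s = 0 := by
      apply Finset.sum_eq_zero
      intro s hs
      have := Finset.mem_range.mp hs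
      simp [hg, Nat.choose_eq_zero_of_lt this]
    rw [this, zero_add]
    apply Finset.sum_congr rfl
    intro i _
    rw [add_comm]
  have estep2 : ∑ s ∈ Finset.range (p + (2*m+2)), g s = ∑ s ∈ Finset.range (2*m+2), g s := by
    symm
    apply Finset.sum_subset (Finset.range_subset_range.mpr (by omega))
    intro s _ hs
    have hs' : 2*m+2 ≤ s := by
      by_contra hc
      exact hs (Finset.mem_range.mpr (by omega))
    have : (Fp (m+1)).coeff s = 0 := by
      apply Polynomial.coeff_eq_zero_of_natDegree_lt
      have := natDegree_Fp m
      omega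
    simp [hg, this]
  have estep3 : ∑ s ∈ Finset.range (2*m+2), g s
      = ∑ t ∈ Finset.range (m+1), g (m+1+t) := by
    rw [show 2*m+2 = (m+1) + (m+1) by omega, Finset.sum_range_add g (m+1) (m+1)]
    have : ∑ s ∈ Finset.range (m+1), g s = 0 := by
      apply Finset.sum_eq_zero
      intro s hs
      simp [hg, Fp_coeff_low m s (Finset.mem_range.mp hs)]
    rw [this, zero_add]
  calc ∑ t ∈ Finset.range (m+1), (Fp (m+1)).coeff (m+1+t) * ((m+1+t).choose p : ℚ)
      = ∑ t ∈ Finset.range (m+1), g (m+1+t) := by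
        apply Finset.sum_congr rfl; intro t _; rw [hg]; ring
    _ = ∑ s ∈ Finset.range (2*m+2), g s := estep3.symm
    _ = ∑ s ∈ Finset.range (p + (2*m+2)), g s := estep2.symm
    _ = ∑ i ∈ Finset.range (2*m+2), g (i + p) := estep1.symm
    _ = ∑ i ∈ Finset.range (2*m+2), ((i + p).choose p : ℚ) * (Fp (m+1)).coeff (i+p) := by
        apply Finset.sum_congr rfl; intro i _; rw [e1]

/-- The key factorial-weighted identity. -/
lemma key_fact (m p : ℕ) (hp : p < m+1) :
    ∑ t ∈ Finset.range (m+1),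
        ((m+1+t).factorial : ℚ) * (Fp (m+1)).coeff (m+1+t) * (((m+1+t-p).factorial : ℚ))⁻¹
      = if p = 0 then 1 else 0 := by
  have hterm : ∀ t : ℕ, ((m+1+t).factorial : ℚ) * (Fp (m+1)).coeff (m+1+t) * (((m+1+t-p).factorial : ℚ))⁻¹
      = (p.factorial : ℚ) * ((Fp (m+1)).coeff (m+1+t) * ((m+1+t).choose p : ℚ)) := by
    intro t
    have hle : p ≤ m+1+t := by omega
    have := Nat.choose_mul_factorial_mul_factorial hle
    have hfac : ((m+1+t).factorial : ℚ) = ((m+1+t).choose p : ℚ) * (p.factorial : ℚ) * (((m+1+t-p).factorial : ℚ)) := by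
      rw [← this]; push_cast; ring
    rw [hfac]
    have hne : (((m+1+t-p).factorial : ℚ)) ≠ 0 := by
      exact_mod_cast Nat.factorial_ne_zero _
    field_simp
  rw [Finset.sum_congr rfl (fun t _ => hterm t), ← Finset.mul_sum, key_choose m p hp]
  by_cases hp0 : p = 0 <;> simp [hp0]


/- STATEMENT 15: Necessary coefficient growth in any presentation of e:
   if e = a·1 + b·G + c·H with a, b depending only on x,y, then for every k ≥ 2
   the coefficient of a at x²y^{k−2} has absolute value 1/q_{k,k}. -/

/-- G = x·(e^z − 1) = x·Σ_{m≥1} z^m/m!  in ℂ[[x,y,z]]. -/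
noncomputable def G : MvPowerSeries (Fin 3) ℂ :=
  fun d => if d 0 = 1 ∧ d 1 = 0 ∧ 1 ≤ d 2 then ((Nat.factorial (d 2) : ℂ))⁻¹ else 0

/-- H = y·z − x  in ℂ[[x,y,z]]. -/
noncomputable def H : MvPowerSeries (Fin 3) ℂ :=
  MvPowerSeries.X 1 * MvPowerSeries.X 2 - MvPowerSeries.X 0

/-- A power series in ℂ[[x,y,z]] depends only on x,y if every exponent in its
support has z-exponent 0. -/
def DependsOnXY (F : MvPowerSeries (Fin 3) ℂ) : Prop :=
  ∀ d : Fin 3 →₀ ℕ, MvPowerSeries.coeff d F ≠ 0 → d 2 = 0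

/-- The rising factorial (1/2)^{\overline{k−1}} = (1/2)(1/2+1)⋯(1/2+k−2). -/
def rise (k : ℕ) : ℚ := ∏ j ∈ Finset.range (k - 1), ((1 : ℚ) / 2 + j)

/-- q_{i,k} = (i−1)! / (4^{k−1}·(i−k)!·(i+k−1)!·(1/2)^{\overline{k−1}}). -/
def q (i k : ℕ) : ℚ :=
  (Nat.factorial (i - 1) : ℚ) /
    (4 ^ (k - 1) * (Nat.factorial (i - k) : ℚ) * (Nat.factorial (i + k - 1) : ℚ) * rise k)

/-- The series e, with coefficient q_{i,k}/q_{k,k} at x^k z^i for i ≥ k ≥ 2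
and zero coefficient at every other monomial. -/
noncomputable def eS : MvPowerSeries (Fin 3) ℂ :=
  fun d => if 2 ≤ d 0 ∧ d 1 = 0 ∧ d 0 ≤ d 2
    then ((q (d 2) (d 0) / q (d 0) (d 0) : ℚ) : ℂ) else 0

open MvPowerSeries Finset

/-- the monomial x^p y^u z^r as a finsupp -/
noncomputable def M3 (p u r : ℕ) : Fin 3 →₀ ℕ :=
  Finsupp.single 0 p + Finsupp.single 1 u + Finsupp.single 2 r

@[simp] lemma M3_apply_0 (p u r : ℕ) : M3 p u r 0 = p := by
  simp [M3, Finsupp.single_apply]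
@[simp] lemma M3_apply_1 (p u r : ℕ) : M3 p u r 1 = u := by
  simp [M3, Finsupp.single_apply]
@[simp] lemma M3_apply_2 (p u r : ℕ) : M3 p u r 2 = r := by
  simp [M3, Finsupp.single_apply]

lemma eq_M3 (d : Fin 3 →₀ ℕ) : d = M3 (d 0) (d 1) (d 2) := by
  ext i
  fin_cases i <;> simp [M3, Finsupp.single_apply]

lemma M3_add (p u r p' u' r' : ℕ) : M3 p u r + M3 p' u' r' = M3 (p+p') (u+u') (r+r') := by
  ext i
  fin_cases i <;> simp

lemma coeff_G (d : Fin 3 →₀ ℕ) :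
    MvPowerSeries.coeff d G = if d 0 = 1 ∧ d 1 = 0 ∧ 1 ≤ d 2 then ((Nat.factorial (d 2) : ℂ))⁻¹ else 0 := rfl

lemma coeff_eS (d : Fin 3 →₀ ℕ) :
    MvPowerSeries.coeff d eS = if 2 ≤ d 0 ∧ d 1 = 0 ∧ d 0 ≤ d 2
      then ((q (d 2) (d 0) / q (d 0) (d 0) : ℚ) : ℂ) else 0 := rfl

lemma depends_zero (f : MvPowerSeries (Fin 3) ℂ) (hf : DependsOnXY f) (p u r : ℕ) (hr : 1 ≤ r) :
    MvPowerSeries.coeff (M3 p u r) f = 0 := by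
  by_contra hc
  have := hf _ hc
  rw [M3_apply_2] at this
  omega

lemma coeff_mul_X0 (f : MvPowerSeries (Fin 3) ℂ) (p u r : ℕ) :
    MvPowerSeries.coeff (M3 p u r) (f * MvPowerSeries.X 0)
      = if 1 ≤ p then MvPowerSeries.coeff (M3 (p-1) u r) f else 0 := by
  rw [MvPowerSeries.X_def, MvPowerSeries.coeff_mul_monomial]
  by_cases hp : 1 ≤ p
  · have hsub : M3 p u r - Finsupp.single 0 1 = M3 (p-1) u r := by
      ext i
      rw [Finsupp.tsub_apply]
      fin_cases i <;> simp [Finsupp.single_apply] <;> omega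
    rw [if_pos, if_pos hp, hsub, mul_one]
    rw [Finsupp.single_le_iff, M3_apply_0]; exact hp
  · rw [if_neg, if_neg hp]
    rw [Finsupp.single_le_iff, M3_apply_0]; exact hp

lemma coeff_mul_X12 (f : MvPowerSeries (Fin 3) ℂ) (p u r : ℕ) :
    MvPowerSeries.coeff (M3 p u r) (f * (MvPowerSeries.X 1 * MvPowerSeries.X 2))
      = if 1 ≤ u ∧ 1 ≤ r then MvPowerSeries.coeff (M3 p (u-1) (r-1)) f else 0 := by
  have hX : (MvPowerSeries.X 1 * MvPowerSeries.X 2 : MvPowerSeries (Fin 3) ℂ)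
      = MvPowerSeries.monomial (Finsupp.single 1 1 + Finsupp.single 2 1) 1 := by
    rw [MvPowerSeries.X_def, MvPowerSeries.X_def, MvPowerSeries.monomial_mul_monomial, mul_one]
  rw [hX, MvPowerSeries.coeff_mul_monomial]
  have hcond : (Finsupp.single 1 1 + Finsupp.single 2 1 ≤ M3 p u r) ↔ (1 ≤ u ∧ 1 ≤ r) := by
    rw [Finsupp.le_def]
    constructor
    · intro hle
      have h1 := hle 1
      have h2 := hle 2
      simp [Finsupp.single_apply] at h1 h2
      exact ⟨h1, h2⟩
    · intro ⟨h1, h2⟩ i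
      fin_cases i <;> simp [Finsupp.single_apply] <;> omega
  by_cases hc : 1 ≤ u ∧ 1 ≤ r
  · have hsub : M3 p u r - (Finsupp.single 1 1 + Finsupp.single 2 1) = M3 p (u-1) (r-1) := by
      ext i
      rw [Finsupp.tsub_apply]
      fin_cases i <;> simp [Finsupp.single_apply] <;> omega
    rw [if_pos (hcond.mpr hc), if_pos hc, hsub, mul_one]
  · rw [if_neg (fun hle => hc (hcond.mp hle)), if_neg hc]

lemma coeff_mul_G (b : MvPowerSeries (Fin 3) ℂ) (hb : DependsOnXY b) (p u r : ℕ) :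
    MvPowerSeries.coeff (M3 p u r) (b * G)
      = if 1 ≤ p ∧ 1 ≤ r then
          MvPowerSeries.coeff (M3 (p-1) u 0) b * ((Nat.factorial r : ℂ))⁻¹ else 0 := by
  classical
  rw [MvPowerSeries.coeff_mul]
  by_cases hd : 1 ≤ p ∧ 1 ≤ r
  · obtain ⟨hp, hr⟩ := hd
    rw [Finset.sum_eq_single (M3 (p-1) u 0, M3 1 0 r)]
    · rw [coeff_G]
      simp [hp, hr]
    · intro pr hmem hne
      by_contra hne0
      have hbu : MvPowerSeries.coeff pr.1 b ≠ 0 := left_ne_zero_of_mul hne0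
      have hgv : MvPowerSeries.coeff pr.2 G ≠ 0 := right_ne_zero_of_mul hne0
      have hu2 : pr.1 2 = 0 := hb _ hbu
      have hcond : pr.2 0 = 1 ∧ pr.2 1 = 0 ∧ 1 ≤ pr.2 2 := by
        by_contra hcc
        rw [coeff_G, if_neg hcc] at hgv
        exact hgv rfl
      have hsum : pr.1 + pr.2 = M3 p u r := Finset.HasAntidiagonal.mem_antidiagonal.mp hmem
      have h0 := DFunLike.congr_fun hsum 0
      have h1 := DFunLike.congr_fun hsum 1
      have h2 := DFunLike.congr_fun hsum 2
      simp only [Finsupp.add_apply, M3_apply_0, M3_apply_1, M3_apply_2] at h0 h1 h2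
      apply hne
      obtain ⟨hc0, hc1, hc2⟩ := hcond
      have e1 : pr.1 = M3 (p-1) u 0 := by
        rw [eq_M3 pr.1, show pr.1 0 = p - 1 by omega, show pr.1 1 = u by omega, hu2]
      have e2 : pr.2 = M3 1 0 r := by
        rw [eq_M3 pr.2, hc0, hc1, show pr.2 2 = r by omega]
      exact Prod.ext e1 e2
    · intro hnm
      exfalso
      apply hnm
      rw [Finset.HasAntidiagonal.mem_antidiagonal, M3_add, show p-1+1 = p by omega]
      simp
  · rw [if_neg hd]
    apply Finset.sum_eq_zero
    intro pr hmem
    by_contra hne0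
    have hbu : MvPowerSeries.coeff pr.1 b ≠ 0 := left_ne_zero_of_mul hne0
    have hgv : MvPowerSeries.coeff pr.2 G ≠ 0 := right_ne_zero_of_mul hne0
    have hu2 : pr.1 2 = 0 := hb _ hbu
    have hcond : pr.2 0 = 1 ∧ pr.2 1 = 0 ∧ 1 ≤ pr.2 2 := by
      by_contra hcc
      rw [coeff_G, if_neg hcc] at hgv
      exact hgv rfl
    have hsum : pr.1 + pr.2 = M3 p u r := Finset.HasAntidiagonal.mem_antidiagonal.mp hmem
    have h0 := DFunLike.congr_fun hsum 0
    have h2 := DFunLike.congr_fun hsum 2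
    simp only [Finsupp.add_apply, M3_apply_0, M3_apply_2] at h0 h2
    exact hd ⟨by omega, by omega⟩

lemma eqn {a b c : MvPowerSeries (Fin 3) ℂ} (hb : DependsOnXY b)
    (h : eS = a * 1 + b * G + c * H) (p u r : ℕ) :
    (if 2 ≤ p ∧ u = 0 ∧ p ≤ r then ((q r p / q p p : ℚ) : ℂ) else 0)
      = MvPowerSeries.coeff (M3 p u r) a
        + (if 1 ≤ p ∧ 1 ≤ r then
            MvPowerSeries.coeff (M3 (p-1) u 0) b * ((Nat.factorial r : ℂ))⁻¹ else 0)
        + ((if 1 ≤ u ∧ 1 ≤ r then MvPowerSeries.coeff (M3 p (u-1) (r-1)) c else 0)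
           - (if 1 ≤ p then MvPowerSeries.coeff (M3 (p-1) u r) c else 0)) := by
  have h' := congrArg (MvPowerSeries.coeff (M3 p u r)) h
  rw [map_add, map_add, mul_one, coeff_eS] at h'
  simp only [M3_apply_0, M3_apply_1, M3_apply_2] at h'
  rw [coeff_mul_G b hb] at h'
  have hH : c * H = c * (MvPowerSeries.X 1 * MvPowerSeries.X 2) - c * MvPowerSeries.X 0 := by
    rw [H]; ring
  rw [hH, map_sub, coeff_mul_X12, coeff_mul_X0] at h'
  exact h'

lemma chainA {a b c : MvPowerSeries (Fin 3) ℂ} (ha : DependsOnXY a) (hb : DependsOnXY b)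
    (h : eS = a * 1 + b * G + c * H) (k : ℕ) (hk : 2 ≤ k) :
    MvPowerSeries.coeff (M3 2 (k-2) 0) a = - MvPowerSeries.coeff (M3 0 (k-1) 0) b := by
  have e1 := eqn hb h 0 k 2
  have e2 := eqn hb h 1 (k-1) 1
  have e3 := eqn hb h 2 (k-2) 0
  rw [depends_zero a ha 0 k 2 (by omega)] at e1
  rw [depends_zero a ha 1 (k-1) 1 (by omega)] at e2
  rw [if_neg (by omega), if_neg (by omega), if_pos (⟨by omega, by omega⟩ : 1 ≤ k ∧ 1 ≤ 2),
    if_neg (by omega)] at e1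
  rw [if_neg (by omega), if_pos (⟨le_refl 1, le_refl 1⟩ : 1 ≤ 1 ∧ 1 ≤ 1),
    if_pos (⟨by omega, le_refl 1⟩ : 1 ≤ k - 1 ∧ 1 ≤ 1),
    if_pos (le_refl 1)] at e2
  rw [if_neg (by omega), if_neg (by omega), if_neg (by omega), if_pos (by omega : 1 ≤ 2)] at e3
  rw [show (2:ℕ) - 1 = 1 by norm_num] at e1 e3
  rw [show k - 1 - 1 = k - 2 by omega] at e2
  rw [show (Nat.factorial 1 : ℂ) = 1 by norm_num [Nat.factorial]] at e2
  norm_num at e1 e2 e3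
  linear_combination -e1 - e2 - e3

lemma chainB {a b c : MvPowerSeries (Fin 3) ℂ} (ha : DependsOnXY a) (hb : DependsOnXY b)
    (h : eS = a * 1 + b * G + c * H) (k R : ℕ) (hk : 2 ≤ k) (hR1 : k + 1 ≤ R) (hR2 : R ≤ 2*k)
    (hq : q k k ≠ 0) :
    ∑ t ∈ Finset.range k, MvPowerSeries.coeff (M3 t (k-1-t) 0) b * (((R-1-t).factorial : ℂ))⁻¹
      = if R = 2*k then 1 else 0 := by
  classical
  set hfun : ℕ → ℂ := fun j =>
    if 1 ≤ j ∧ j ≤ k then MvPowerSeries.coeff (M3 (j-1) (k-j) (R-j)) c else 0 with hhfun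
  set Bfun : ℕ → ℂ := fun j =>
    if 1 ≤ j ∧ 1 ≤ R - j then
      MvPowerSeries.coeff (M3 (j-1) (k-j) 0) b * (((R-j).factorial : ℂ))⁻¹ else 0 with hBfun
  set Efun : ℕ → ℂ := fun j =>
    if 2 ≤ j ∧ k - j = 0 ∧ j ≤ R - j then ((q (R-j) j / q j j : ℚ) : ℂ) else 0 with hEfun
  have heq : ∀ j ∈ Finset.range (k+1), Efun j = Bfun j + (hfun (j+1) - hfun j) := by
    intro j hj
    have hjk : j ≤ k := by have := Finset.mem_range.mp hj; omega
    have e := eqn hb h j (k-j) (R-j)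
    rw [depends_zero a ha j (k-j) (R-j) (by omega)] at e
    have hC1 : (if 1 ≤ k - j ∧ 1 ≤ R - j then
        MvPowerSeries.coeff (M3 j (k-j-1) (R-j-1)) c else 0) = hfun (j+1) := by
      simp only [hhfun]
      by_cases hjk1 : j + 1 ≤ k
      · rw [if_pos ⟨by omega, by omega⟩, if_pos ⟨by omega, hjk1⟩]
        rw [show j + 1 - 1 = j by omega, show k - (j+1) = k - j - 1 by omega,
          show R - (j+1) = R - j - 1 by omega]
      · rw [if_neg (by omega), if_neg (by omega)]
    have hC2 : (if 1 ≤ j then MvPowerSeries.coeff (M3 (j-1) (k-j) (R-j)) c else 0) = hfun j := by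
      simp only [hhfun]
      by_cases hj1 : 1 ≤ j
      · rw [if_pos hj1, if_pos ⟨hj1, hjk⟩]
      · rw [if_neg hj1, if_neg (by omega)]
    rw [hC1, hC2] at e
    simp only [hEfun, hBfun]
    rw [zero_add] at e
    exact e
  have hsum := Finset.sum_congr rfl heq
  rw [Finset.sum_add_distrib, Finset.sum_range_sub hfun (k+1)] at hsum
  have hh0 : hfun 0 = 0 := by simp [hhfun]
  have hhk1 : hfun (k+1) = 0 := by simp only [hhfun]; rw [if_neg (by omega)]
  rw [hh0, hhk1, sub_zero, add_zero] at hsum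
  have hE : ∑ j ∈ Finset.range (k+1), Efun j = if R = 2*k then 1 else 0 := by
    rw [Finset.sum_eq_single k]
    · simp only [hEfun]
      by_cases hR : R = 2*k
      · rw [if_pos ⟨hk, by omega, by omega⟩, if_pos hR, show R - k = k by omega]
        rw [div_self hq]
        norm_num
      · rw [if_neg (by omega), if_neg hR]
    · intro j hj hne
      simp only [hEfun]; rw [if_neg]
      have := Finset.mem_range.mp hj
      rintro ⟨h1, h2, h3⟩
      omega
    · intro hnm
      exact absurd (Finset.self_mem_range_succ k) hnm
  have hB : ∑ j ∈ Finset.range (k+1), Bfun j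
      = ∑ t ∈ Finset.range k, MvPowerSeries.coeff (M3 t (k-1-t) 0) b * (((R-1-t).factorial : ℂ))⁻¹ := by
    rw [Finset.sum_range_succ' Bfun k]
    have hB0 : Bfun 0 = 0 := by simp [hBfun]
    rw [hB0, add_zero]
    apply Finset.sum_congr rfl
    intro t ht
    have htk := Finset.mem_range.mp ht
    simp only [hBfun]
    rw [if_pos ⟨by omega, by omega⟩]
    rw [show t + 1 - 1 = t by omega, show k - (t+1) = k - 1 - t by omega,
      show R - (t+1) = R - 1 - t by omega]
  rw [hE, hB] at hsum
  exact hsum.symm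

lemma rise_succ (m : ℕ) : rise (m+1) = ((2*m).factorial : ℚ) / (4^m * (m.factorial : ℚ)) := by
  induction m with
  | zero => simp [rise]
  | succ n ih =>
    have hstep : rise (n+2) = rise (n+1) * ((1:ℚ)/2 + n) := by
      rw [rise, rise, show n+2-1 = n+1 from rfl, show n+1-1 = n from rfl,
        Finset.prod_range_succ]
    have hf : ((2*(n+1)).factorial : ℚ) = (2*n+2) * ((2*n+1) * ((2*n).factorial : ℚ)) := by
      rw [show 2*(n+1) = (2*n+1)+1 by ring, Nat.factorial_succ,
        show 2*n+1 = (2*n)+1 from rfl, Nat.factorial_succ]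
      push_cast; ring
    have hf2 : (((n+1)).factorial : ℚ) = (n+1) * (n.factorial : ℚ) := by
      rw [Nat.factorial_succ]; push_cast; ring
    rw [hstep, ih, hf, hf2]
    have h1 : ((n.factorial : ℚ)) ≠ 0 := by exact_mod_cast Nat.factorial_ne_zero n
    have h2 : ((4:ℚ))^n ≠ 0 := by positivity
    field_simp
    ring

lemma q_kk (m : ℕ) : q (m+1) (m+1)
    = ((m.factorial : ℚ))^2 / (((2*m+1).factorial : ℚ) * ((2*m).factorial : ℚ)) := by
  unfold q
  rw [show m+1-1 = m from rfl, show m+1-(m+1) = 0 by omega, show m+1+(m+1)-1 = 2*m+1 by omega,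
    rise_succ m]
  have h1 : ((m.factorial : ℚ)) ≠ 0 := by exact_mod_cast Nat.factorial_ne_zero m
  have h2 : ((4:ℚ))^m ≠ 0 := by positivity
  have h3 : (((2*m).factorial : ℚ)) ≠ 0 := by exact_mod_cast Nat.factorial_ne_zero _
  have h4 : (((2*m+1).factorial : ℚ)) ≠ 0 := by exact_mod_cast Nat.factorial_ne_zero _
  rw [Nat.factorial_zero]
  field_simp
  ring

lemma q_kk_ne (m : ℕ) : q (m+1) (m+1) ≠ 0 := by
  rw [q_kk]
  have h1 : ((m.factorial : ℚ)) ≠ 0 := by exact_mod_cast Nat.factorial_ne_zero m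
  have h3 : (((2*m).factorial : ℚ)) ≠ 0 := by exact_mod_cast Nat.factorial_ne_zero _
  have h4 : (((2*m+1).factorial : ℚ)) ≠ 0 := by exact_mod_cast Nat.factorial_ne_zero _
  positivity

lemma b_val {a b c : MvPowerSeries (Fin 3) ℂ} (ha : DependsOnXY a) (hb : DependsOnXY b)
    (h : eS = a * 1 + b * G + c * H) (m : ℕ) (hm : 1 ≤ m) :
    MvPowerSeries.coeff (M3 0 m 0) b
      = ((((2*m+1).factorial : ℚ) * (Fp (m+1)).coeff (2*m+1) : ℚ) : ℂ) := by
  classical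
  have hk : 2 ≤ m + 1 := by omega
  have hq : q (m+1) (m+1) ≠ 0 := q_kk_ne m
  set B : ℕ → ℂ := fun t => MvPowerSeries.coeff (M3 t (m-t) 0) b with hB
  set w : ℕ → ℚ := fun t' => ((m+1+t').factorial : ℚ) * (Fp (m+1)).coeff (m+1+t') with hw
  have hcb : ∀ t' ∈ Finset.range (m+1),
      ∑ t ∈ Finset.range (m+1), B t * (((m+1+t'-t).factorial : ℂ))⁻¹
        = if t' = m then 1 else 0 := by
    intro t' ht'
    have ht'm := Finset.mem_range.mp ht'
    have hcb0 := chainB ha hb h (m+1) (m+2+t') hk (by omega) (by omega) hq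
    have hleft : ∑ t ∈ Finset.range (m+1),
        MvPowerSeries.coeff (M3 t (m+1-1-t) 0) b * (((m+2+t'-1-t).factorial : ℂ))⁻¹
        = ∑ t ∈ Finset.range (m+1), B t * (((m+1+t'-t).factorial : ℂ))⁻¹ := by
      apply Finset.sum_congr rfl
      intro t ht
      rw [hB, show m+1-1-t = m-t by omega, show m+2+t'-1-t = m+1+t'-t by omega]
    have hright : (if m+2+t' = 2*(m+1) then (1:ℂ) else 0) = if t' = m then 1 else 0 := by
      by_cases hc : t' = m
      · rw [if_pos hc, if_pos (by omega)]
      · rw [if_neg hc, if_neg (by omega)]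
    rw [hleft, hright] at hcb0
    exact hcb0
  have hdouble : ∑ t' ∈ Finset.range (m+1), (w t' : ℂ) *
      (∑ t ∈ Finset.range (m+1), B t * (((m+1+t'-t).factorial : ℂ))⁻¹) = (w m : ℂ) := by
    rw [Finset.sum_congr rfl (fun t' ht' => by rw [hcb t' ht'])]
    rw [Finset.sum_eq_single m]
    · rw [if_pos rfl, mul_one]
    · intro t' _ hne; rw [if_neg hne, mul_zero]
    · intro hnm; exact absurd (Finset.self_mem_range_succ m) hnm
  have hdouble2 : ∑ t' ∈ Finset.range (m+1), (w t' : ℂ) *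
      (∑ t ∈ Finset.range (m+1), B t * (((m+1+t'-t).factorial : ℂ))⁻¹) = B 0 := by
    have hform : ∀ t' ∈ Finset.range (m+1), (w t' : ℂ) *
        (∑ t ∈ Finset.range (m+1), B t * (((m+1+t'-t).factorial : ℂ))⁻¹)
        = ∑ t ∈ Finset.range (m+1), B t * ((w t' : ℂ) * (((m+1+t'-t).factorial : ℂ))⁻¹) := by
      intro t' _
      rw [Finset.mul_sum]
      apply Finset.sum_congr rfl
      intro t _; ring
    rw [Finset.sum_congr rfl hform, Finset.sum_comm]
    have hinner : ∀ t ∈ Finset.range (m+1),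
        ∑ t' ∈ Finset.range (m+1), B t * ((w t' : ℂ) * (((m+1+t'-t).factorial : ℂ))⁻¹)
          = B t * (if t = 0 then 1 else 0) := by
      intro t ht
      have htm := Finset.mem_range.mp ht
      rw [← Finset.mul_sum]
      congr 1
      have hkf := key_fact m t (by omega)
      have hcast : ∑ t' ∈ Finset.range (m+1), (w t' : ℂ) * (((m+1+t'-t).factorial : ℂ))⁻¹
          = ((∑ t' ∈ Finset.range (m+1),
              ((m+1+t').factorial : ℚ) * (Fp (m+1)).coeff (m+1+t')
                * (((m+1+t'-t).factorial : ℚ))⁻¹ : ℚ) : ℂ) := by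
        push_cast
        apply Finset.sum_congr rfl
        intro t' _
        rw [hw]
        push_cast
        ring
      rw [hcast, hkf]
      by_cases hc : t = 0
      · rw [if_pos hc, if_pos hc]; norm_num
      · rw [if_neg hc, if_neg hc]; norm_num
    rw [Finset.sum_congr rfl hinner, Finset.sum_eq_single 0]
    · rw [if_pos rfl, mul_one]
    · intro t _ hne; rw [if_neg hne, mul_zero]
    · intro hnm; exact absurd (Finset.mem_range.mpr (by omega)) hnm
  have : B 0 = (w m : ℂ) := by rw [← hdouble2, hdouble]
  rw [hB] at this
  rw [hw] at this
  simp only [Nat.sub_zero] at this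
  rw [this]
  norm_num
  rw [show m+1+m = 2*m+1 by omega]

theorem e_presentation_coefficient_growth
    (a b c : MvPowerSeries (Fin 3) ℂ)
    (ha : DependsOnXY a) (hb : DependsOnXY b)
    (h : eS = a * 1 + b * G + c * H) (k : ℕ) (hk : 2 ≤ k) :
    ‖(MvPowerSeries.coeff
      (Finsupp.single 0 2 + Finsupp.single 1 (k - 2)) a)‖ = 1 / ((q k k : ℝ)) := by
  obtain ⟨m, rfl⟩ : ∃ m, k = m + 1 := ⟨k - 1, by omega⟩
  have hm : 1 ≤ m := by omega
  have hmono : (Finsupp.single 0 2 + Finsupp.single 1 (m+1-2) : Fin 3 →₀ ℕ) = M3 2 (m+1-2) 0 := by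
    ext i; fin_cases i <;> simp [M3, Finsupp.single_apply]
  rw [hmono, chainA ha hb h (m+1) hk, show m+1-1 = m from rfl, b_val ha hb h m hm,
    Fp_coeff_top m]
  have habs : ‖(-(((((2*m+1).factorial : ℚ) * ((-1)^m * ((2*m).choose m : ℚ))) : ℚ) : ℂ))‖
      = (((2*m+1).factorial : ℝ)) * (((2*m).choose m : ℝ)) := by
    rw [show (-(((((2*m+1).factorial : ℚ) * ((-1)^m * ((2*m).choose m : ℚ))) : ℚ) : ℂ))
        = (((-(((2*m+1).factorial : ℚ) * ((-1)^m * ((2*m).choose m : ℚ))) : ℚ) : ℝ) : ℂ) by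
      push_cast; ring]
    rw [Complex.norm_real, Real.norm_eq_abs]
    push_cast
    rw [abs_neg, abs_mul, abs_mul, abs_pow, abs_neg, abs_one, one_pow, one_mul,
      abs_of_nonneg (by positivity : ((2*m+1).factorial : ℝ) ≥ 0),
      abs_of_nonneg (by positivity : (((2*m).choose m : ℝ)) ≥ 0)]
  rw [habs, q_kk m]
  have hchn : (2*m).choose m * m.factorial * m.factorial = (2*m).factorial := by
    have h0 := Nat.choose_mul_factorial_mul_factorial (by omega : m ≤ 2*m)
    rwa [show 2*m - m = m by omega] at h0
  have hch : ((2*m).choose m : ℝ) * (m.factorial : ℝ) * (m.factorial : ℝ)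
      = ((2*m).factorial : ℝ) := by exact_mod_cast hchn
  have h1 : ((m.factorial : ℝ)) ≠ 0 := by exact_mod_cast Nat.factorial_ne_zero m
  push_cast
  rw [one_div_div]
  rw [eq_div_iff (by positivity)]
  linear_combination (((2*m+1).factorial : ℝ)) * hch
end

section
/- Gabrielov-type counterexample to nested linear analytic approximation: there do NOT exist power series a, b, c ∈ ℂ[[x,y,z]] with a and b depending only on x,y, each of a, b, c having geometrically bounded coefficients, such that e = a·1 + b·G + c·H. (Note that all coefficients of e have absolute value at most 1, so e itself has geometrically bounded coefficients, and e does admit such a presentation with formal a, b, c.) -/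
/-- A power series has geometrically bounded coefficients (equivalently, is
convergent) if |coeff_α| ≤ C·R^{|α|} for some C, R > 0, |α| the total degree. -/
def GeomBounded (F : MvPowerSeries (Fin 3) ℂ) : Prop :=
  ∃ C R : ℝ, 0 < C ∧ 0 < R ∧ ∀ d : Fin 3 →₀ ℕ,
    ‖MvPowerSeries.coeff d F‖ ≤ C * R ^ (d.sum fun _ m => m)

/- ------------------- auxiliary material ------------------- -/

noncomputable def d3 (a b c : ℕ) : Fin 3 →₀ ℕ :=
  Finsupp.single 0 a + Finsupp.single 1 b + Finsupp.single 2 c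

lemma d3_0 (a b c : ℕ) : d3 a b c 0 = a := by simp [d3, Finsupp.single_apply]
lemma d3_1 (a b c : ℕ) : d3 a b c 1 = b := by simp [d3, Finsupp.single_apply]
lemma d3_2 (a b c : ℕ) : d3 a b c 2 = c := by simp [d3, Finsupp.single_apply]

lemma fin3_ext {f g : Fin 3 →₀ ℕ} (h0 : f 0 = g 0) (h1 : f 1 = g 1) (h2 : f 2 = g 2) :
    f = g := Finsupp.ext fun i => by fin_cases i <;> assumption

lemma d3_sub0 (a b c : ℕ) : d3 a b c - Finsupp.single 0 1 = d3 (a-1) b c := by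
  apply fin3_ext <;> simp [Finsupp.tsub_apply, Finsupp.single_apply, d3_0, d3_1, d3_2]
lemma d3_sub1 (a b c : ℕ) : d3 a b c - Finsupp.single 1 1 = d3 a (b-1) c := by
  apply fin3_ext <;> simp [Finsupp.tsub_apply, Finsupp.single_apply, d3_0, d3_1, d3_2]
lemma d3_sub2 (a b c : ℕ) : d3 a b c - Finsupp.single 2 1 = d3 a b (c-1) := by
  apply fin3_ext <;> simp [Finsupp.tsub_apply, Finsupp.single_apply, d3_0, d3_1, d3_2]
lemma d3_single_le0 (a b c n : ℕ) : Finsupp.single 0 n ≤ d3 a b c ↔ n ≤ a := by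
  rw [Finsupp.single_le_iff, d3_0]
lemma d3_single_le1 (a b c n : ℕ) : Finsupp.single 1 n ≤ d3 a b c ↔ n ≤ b := by
  rw [Finsupp.single_le_iff, d3_1]
lemma d3_single_le2 (a b c n : ℕ) : Finsupp.single 2 n ≤ d3 a b c ↔ n ≤ c := by
  rw [Finsupp.single_le_iff, d3_2]

lemma d3_sum (a b c : ℕ) : (d3 a b c).sum (fun _ m => m) = a + b + c := by
  rw [Finsupp.sum_fintype _ _ (fun _ => rfl)]
  simp [Fin.sum_univ_three, d3_0, d3_1, d3_2]

lemma rise_pos (k : ℕ) : 0 < rise k :=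
  Finset.prod_pos fun j _ => by positivity

lemma q_ne (k : ℕ) : q k k ≠ 0 := by
  unfold q
  apply div_ne_zero
  · exact_mod_cast Nat.factorial_ne_zero _
  · have h := rise_pos k
    have h1 : (0:ℚ) < (Nat.factorial (k-k) : ℚ) := by exact_mod_cast Nat.factorial_pos _
    have h2 : (0:ℚ) < (Nat.factorial (k+k-1) : ℚ) := by exact_mod_cast Nat.factorial_pos _
    positivity

/-- The c·H part telescopes to zero under the functional
`F ↦ ∑_{p=0}^{k} coeff_{(p, k-p, 2k-p)} F`. -/
lemma sum_cH (c : MvPowerSeries (Fin 3) ℂ) (k : ℕ) (hk : 1 ≤ k) :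
    ∑ p ∈ Finset.range (k+1),
      MvPowerSeries.coeff (d3 p (k-p) (2*k-p)) (c * H) = 0 := by
  classical
  have hXY : ∀ p, p ≤ k → MvPowerSeries.coeff (d3 p (k-p) (2*k-p))
      (c * (MvPowerSeries.X 1 * MvPowerSeries.X 2)) =
      (if p < k then MvPowerSeries.coeff (d3 p (k-p-1) (2*k-p-1)) c else 0) := by
    intro p hpk
    rw [← mul_assoc, MvPowerSeries.X_def (R := ℂ) (σ := Fin 3) 2,
      MvPowerSeries.coeff_mul_monomial,
      if_pos ((d3_single_le2 p (k-p) (2*k-p) 1).2 (by omega)), d3_sub2,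
      MvPowerSeries.X_def (R := ℂ) (σ := Fin 3) 1, MvPowerSeries.coeff_mul_monomial]
    by_cases hp : p < k
    · rw [if_pos ((d3_single_le1 _ _ _ 1).2 (by omega)), d3_sub1, if_pos hp,
        mul_one, mul_one]
    · rw [if_neg (by rw [d3_single_le1]; omega), if_neg hp, zero_mul]
  have hX0 : ∀ p, p ≤ k → MvPowerSeries.coeff (d3 p (k-p) (2*k-p))
      (c * MvPowerSeries.X 0) =
      (if 1 ≤ p then MvPowerSeries.coeff (d3 (p-1) (k-p) (2*k-p)) c else 0) := by
    intro p hpk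
    rw [MvPowerSeries.X_def (R := ℂ) (σ := Fin 3) 0, MvPowerSeries.coeff_mul_monomial]
    by_cases hp : 1 ≤ p
    · rw [if_pos ((d3_single_le0 _ _ _ 1).2 hp), d3_sub0, if_pos hp, mul_one]
    · rw [if_neg (by rw [d3_single_le0]; omega), if_neg hp]
  rw [H]
  simp only [mul_sub, map_sub]
  rw [Finset.sum_sub_distrib, sub_eq_zero]
  rw [Finset.sum_congr rfl (fun p hp => hXY p (by
        rw [Finset.mem_range] at hp; omega)),
      Finset.sum_congr rfl (fun p hp => hX0 p (by
        rw [Finset.mem_range] at hp; omega))]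
  rw [Finset.sum_range_succ, if_neg (lt_irrefl k), add_zero]
  rw [Finset.sum_range_succ' (fun p => if 1 ≤ p then
        MvPowerSeries.coeff (d3 (p-1) (k-p) (2*k-p)) c else 0) k]
  simp only [if_neg (by omega : ¬ (1:ℕ) ≤ 0), add_zero]
  apply Finset.sum_congr rfl
  intro p hp
  rw [Finset.mem_range] at hp
  rw [if_pos hp, if_pos (by omega : 1 ≤ p + 1)]
  congr 2

/-- Coefficient of `b*G` at `(p, k-p, 2k-p)` for `1 ≤ p ≤ k`, when `b` depends
only on `x, y`. -/
lemma coeff_bG (b : MvPowerSeries (Fin 3) ℂ) (hb : DependsOnXY b) (k p : ℕ)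
    (hp : 1 ≤ p) (hpk : p ≤ k) (hk : 1 ≤ k) :
    MvPowerSeries.coeff (d3 p (k-p) (2*k-p)) (b * G) =
      MvPowerSeries.coeff (d3 (p-1) (k-p) 0) b * ((Nat.factorial (2*k-p) : ℂ))⁻¹ := by
  classical
  rw [MvPowerSeries.coeff_mul]
  rw [Finset.sum_eq_single_of_mem (d3 (p-1) (k-p) 0, d3 1 0 (2*k-p))]
  · congr 1
    show G _ = _
    rw [G]
    rw [if_pos]
    · rw [d3_2]
    · refine ⟨by rw [d3_0], by rw [d3_1], ?_⟩
      rw [d3_2]; omega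
  · rw [Finset.HasAntidiagonal.mem_antidiagonal]
    apply fin3_ext <;>
      simp only [Finsupp.add_apply, d3_0, d3_1, d3_2] <;> omega
  · rintro ⟨u, v⟩ hm hne
    rw [Finset.HasAntidiagonal.mem_antidiagonal] at hm
    by_contra hzero
    have hu : MvPowerSeries.coeff u b ≠ 0 := left_ne_zero_of_mul hzero
    have hv : MvPowerSeries.coeff v G ≠ 0 := right_ne_zero_of_mul hzero
    have hu2 : u 2 = 0 := hb u hu
    have hvc : v 0 = 1 ∧ v 1 = 0 ∧ 1 ≤ v 2 := by
      by_contra hc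
      exact hv (by show G v = 0; rw [G, if_neg hc])
    have e0 : u 0 + v 0 = p := by
      have := congrArg (fun f => f 0) hm; simpa [Finsupp.add_apply, d3_0] using this
    have e1 : u 1 + v 1 = k - p := by
      have := congrArg (fun f => f 1) hm; simpa [Finsupp.add_apply, d3_1] using this
    have e2 : u 2 + v 2 = 2*k - p := by
      have := congrArg (fun f => f 2) hm; simpa [Finsupp.add_apply, d3_2] using this
    apply hne
    have hu' : u = d3 (p-1) (k-p) 0 := by
      apply fin3_ext <;> simp only [d3_0, d3_1, d3_2] <;> omega
    have hv' : v = d3 1 0 (2*k-p) := by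
      apply fin3_ext <;> simp only [d3_0, d3_1, d3_2] <;> omega
    exact Prod.ext hu' hv'

lemma coeff_bG0 (b : MvPowerSeries (Fin 3) ℂ) (k : ℕ) :
    MvPowerSeries.coeff (d3 0 (k-0) (2*k-0)) (b * G) = 0 := by
  classical
  rw [MvPowerSeries.coeff_mul]
  apply Finset.sum_eq_zero
  rintro ⟨u, v⟩ hm
  rw [Finset.HasAntidiagonal.mem_antidiagonal] at hm
  have e0 : u 0 + v 0 = 0 := by
    have := congrArg (fun f => f 0) hm; simpa [Finsupp.add_apply, d3_0] using this
  have hGv : G v = 0 := by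
    rw [G, if_neg]; rintro ⟨h1, -, -⟩; omega
  show _ * G v = 0
  rw [hGv, mul_zero]

theorem gabrielov_counterexample :
    ¬ ∃ a b c : MvPowerSeries (Fin 3) ℂ,
      DependsOnXY a ∧ DependsOnXY b ∧
      GeomBounded a ∧ GeomBounded b ∧ GeomBounded c ∧
      eS = a * 1 + b * G + c * H := by
  classical
  rintro ⟨a, b, c, ha, hb, -, ⟨C, R, hC, hR, hBb⟩, -, heq⟩
  have hlim : Filter.Tendsto (fun n : ℕ => 2 * (C * (R ^ n / (Nat.factorial n : ℝ))))
      Filter.atTop (nhds 0) := by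
    have := (FloorSemiring.tendsto_pow_div_factorial_atTop (K := ℝ) R).const_mul (2 * C)
    simpa [mul_assoc] using this
  have hev : ∀ᶠ n in Filter.atTop,
      2 * (C * (R ^ n / (Nat.factorial n : ℝ))) < 1 :=
    hlim.eventually_lt_const (by norm_num)
  rw [Filter.eventually_atTop] at hev
  obtain ⟨N, hN⟩ := hev
  set n : ℕ := N + 1 with hn
  set k : ℕ := n + 1 with hkdef
  have hk2 : 2 ≤ k := by omega
  set dd : ℕ → (Fin 3 →₀ ℕ) := fun p => d3 p (k-p) (2*k-p) with hdd
  have hA : ∑ p ∈ Finset.range (k+1), MvPowerSeries.coeff (dd p) eS = 1 := by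
    rw [Finset.sum_eq_single_of_mem k (by simp)]
    · show eS (dd k) = 1
      rw [eS, if_pos]
      · simp only [hdd, d3_0, d3_2]
        rw [(by omega : 2*k - k = k), div_self (q_ne k)]
        norm_num
      · refine ⟨by rw [d3_0]; omega, by rw [d3_1]; omega, ?_⟩
        rw [d3_0, d3_2]; omega
    · intro p hp hpk
      rw [Finset.mem_range] at hp
      show eS (dd p) = 0
      rw [eS, if_neg]
      rintro ⟨-, h1, -⟩
      rw [d3_1] at h1
      omega
  have hB : ∑ p ∈ Finset.range (k+1), MvPowerSeries.coeff (dd p) a = 0 := by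
    apply Finset.sum_eq_zero
    intro p hp
    rw [Finset.mem_range] at hp
    by_contra h
    have := ha _ h
    rw [d3_2] at this
    omega
  have hCsum := sum_cH c k (by omega)
  have hkey : (1 : ℂ) = ∑ p ∈ Finset.range (k+1), MvPowerSeries.coeff (dd p) (b * G) := by
    have hterm : ∀ p, MvPowerSeries.coeff (dd p) eS =
        MvPowerSeries.coeff (dd p) a + MvPowerSeries.coeff (dd p) (b * G) +
        MvPowerSeries.coeff (dd p) (c * H) := by
      intro p
      conv_lhs => rw [heq]
      rw [mul_one]
      simp [map_add]
    rw [← hA, Finset.sum_congr rfl (fun p _ => hterm p), Finset.sum_add_distrib,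
      Finset.sum_add_distrib, hB, hCsum, zero_add, add_zero]
  have hbound : ∀ p ∈ Finset.range (k+1),
      ‖MvPowerSeries.coeff (dd p) (b * G)‖ ≤
        C * R ^ n * ((Nat.factorial k : ℝ))⁻¹ := by
    intro p hp
    rw [Finset.mem_range] at hp
    rcases Nat.eq_zero_or_pos p with h0 | h1
    · subst h0
      show ‖MvPowerSeries.coeff (d3 0 (k-0) (2*k-0)) (b * G)‖ ≤ _
      rw [coeff_bG0 b k]
      simp only [norm_zero]
      positivity
    · show ‖MvPowerSeries.coeff (d3 p (k-p) (2*k-p)) (b * G)‖ ≤ _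
      rw [coeff_bG b hb k p h1 (by omega) (by omega), norm_mul]
      have e1 : ‖MvPowerSeries.coeff (d3 (p-1) (k-p) 0) b‖ ≤ C * R ^ n := by
        have := hBb (d3 (p-1) (k-p) 0)
        rwa [d3_sum, (by omega : p - 1 + (k - p) + 0 = n)] at this
      have e2 : ‖((Nat.factorial (2*k-p) : ℂ))⁻¹‖ ≤
          ((Nat.factorial k : ℝ))⁻¹ := by
        rw [norm_inv]
        rw [(by rw [Complex.norm_natCast] :
          ((Nat.factorial (2*k-p) : ℝ)) = ‖((Nat.factorial (2*k-p) : ℂ))‖).symm]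
        apply inv_anti₀
        · exact_mod_cast Nat.factorial_pos k
        · exact_mod_cast Nat.factorial_le (by omega : k ≤ 2*k - p)
      exact mul_le_mul e1 e2 (by positivity) (by positivity)
  have habs : (1 : ℝ) ≤ ((k:ℝ)+1) * (C * R ^ n * ((Nat.factorial k : ℝ))⁻¹) := by
    have h1 : ‖(1 : ℂ)‖ ≤
        ∑ p ∈ Finset.range (k+1), ‖MvPowerSeries.coeff (dd p) (b * G)‖ := by
      rw [hkey]
      exact norm_sum_le _ _
    have h2 : ∑ p ∈ Finset.range (k+1),
        ‖MvPowerSeries.coeff (dd p) (b * G)‖ ≤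
        ((k:ℝ)+1) * (C * R ^ n * ((Nat.factorial k : ℝ))⁻¹) := by
      have h3 := Finset.sum_le_sum hbound
      rwa [Finset.sum_const, Finset.card_range, nsmul_eq_mul, Nat.cast_add,
        Nat.cast_one] at h3
    simpa using h1.trans h2
  have hfpos : (0:ℝ) < (Nat.factorial n : ℝ) := by exact_mod_cast Nat.factorial_pos n
  have hfact : (Nat.factorial k : ℝ) = ((n:ℝ)+1) * (Nat.factorial n : ℝ) := by
    rw [hkdef, Nat.factorial_succ]
    push_cast
    ring
  have harith : ((k:ℝ)+1) * (C * R ^ n * ((Nat.factorial k : ℝ))⁻¹) ≤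
      2 * (C * (R ^ n / (Nat.factorial n : ℝ))) := by
    rw [hfact, mul_inv]
    have hstep : ((k:ℝ)+1) * (((n:ℝ)+1))⁻¹ ≤ 2 := by
      rw [mul_inv_le_iff₀ (by positivity : (0:ℝ) < (n:ℝ)+1)]
      rw [hkdef]
      push_cast
      nlinarith [Nat.cast_nonneg (α := ℝ) n]
    calc ((k:ℝ)+1) * (C * R ^ n * ((((n:ℝ)+1))⁻¹ * ((Nat.factorial n : ℝ))⁻¹))
        = (((k:ℝ)+1) * (((n:ℝ)+1))⁻¹) * (C * (R ^ n * ((Nat.factorial n : ℝ))⁻¹)) := by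
          ring
      _ ≤ 2 * (C * (R ^ n * ((Nat.factorial n : ℝ))⁻¹)) :=
          mul_le_mul_of_nonneg_right hstep (by positivity)
      _ = 2 * (C * (R ^ n / (Nat.factorial n : ℝ))) := by rw [div_eq_mul_inv]
  have hsmall := hN n (by omega)
  linarith
end
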